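/- Let ν be a Lévy measure on ℝ that is absolutely continuous with respect to Lebesgue measure, with ν(ℝ) = ∞, ∫ y² ν(dy) < ∞ and ∫ |y|³ ν(dy) < ∞. For Λ > 0 let ε = ε(Λ) > 0 solve ∫_{{|y|>ε}} ν(dy) + (1/(4ε²)) ∫_{{|y|≤ε}} y² ν(dy) = Λ, and let α_1, α_2 ≥ 0 satisfy α_1 + α_2 = (1/(4ε²)) ∫_{{|y|≤ε}} y² ν(dy). Then the measure ν̄_ε(dy) = 1_{{|y|>ε}} ν(dy) + α_1 δ_{−2ε}(dy) + α_2 δ_{2ε}(dy) is a solution of problem Ω_{3,Λ}, and the optimal value satisfies E_3(Λ) ≤ 3 ε(Λ) ∫_{{|y|≤ε(Λ)}} y² ν(dy); in particular E_3(Λ) = o(Λ^{−1/2}) as Λ → ∞. -/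

import Mathlib

open MeasureTheory Filter Set
open scoped ENNReal


/-- The total variation measure `|μ - ν| = (μ - μ⊓ν) + (ν - μ⊓ν)` of the difference of two
positive measures. -/
noncomputable def tvDist (μ ν : Measure ℝ) : Measure ℝ := (μ - μ ⊓ ν) + (ν - μ ⊓ ν)

/-- The functional `J(ν̄) = ∫ |y|³ |ν - ν̄|(dy)`. -/
noncomputable def Jfun3 (ν νb : Measure ℝ) : ℝ≥0∞ :=
  ∫⁻ y, ENNReal.ofReal (|y| ^ 3) ∂(tvDist ν νb)

/-- The constraint set of problem `Ω_{3,Λ}`: finite measures of mass `Λ` matching the second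
moment of `ν`. -/
def Constraint3 (ν : Measure ℝ) (Λ : ℝ) (νb : Measure ℝ) : Prop :=
  IsFiniteMeasure νb ∧ νb Set.univ = ENNReal.ofReal Λ ∧
    MeasureTheory.Integrable (fun y => y ^ 2) νb ∧ (∫ y, y ^ 2 ∂νb) = ∫ y, y ^ 2 ∂ν

/-- The approximating measure `ν̄_ε = 1_{|y|>ε} ν + α₁ δ_{-2ε} + α₂ δ_{2ε}`. -/
noncomputable def approx3 (ν : Measure ℝ) (ε α₁ α₂ : ℝ) : Measure ℝ :=
  ν.restrict {y : ℝ | ε < |y|} + ENNReal.ofReal α₁ • Measure.dirac (-(2 * ε))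
    + ENNReal.ofReal α₂ • Measure.dirac (2 * ε)


namespace S9

noncomputable def f : ℝ → ℝ≥0∞ := fun y => ENNReal.ofReal (|y| ^ 3)
noncomputable def g : ℝ → ℝ≥0∞ := fun y => ENNReal.ofReal (y ^ 2)

lemma f_meas : Measurable f := by
  unfold f; exact (continuous_abs.pow 3).measurable.ennreal_ofReal

lemma g_meas : Measurable g := by
  unfold g; exact (continuous_pow 2).measurable.ennreal_ofReal

def As (ε : ℝ) : Set ℝ := {y : ℝ | ε < |y|}

lemma measAs (ε : ℝ) : MeasurableSet (As ε) :=
  measurableSet_lt measurable_const continuous_abs.measurable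

lemma compl_As (ε : ℝ) : (As ε)ᶜ = {y : ℝ | |y| ≤ ε} := by
  ext y; simp [As, not_lt]

lemma mem_As {ε y : ℝ} : y ∈ As ε ↔ ε < |y| := Iff.rfl

lemma measure_As_lt_top {ν : Measure ℝ} (hν2 : (∫⁻ y, g y ∂ν) < ⊤) {ε : ℝ} (hε : 0 < ε) :
    ν (As ε) < ⊤ := by
  have key : ENNReal.ofReal (ε ^ 2) * ν (As ε) ≤ ∫⁻ y, g y ∂ν := by
    rw [← setLIntegral_const (As ε) (ENNReal.ofReal (ε ^ 2))]
    calc ∫⁻ _ in As ε, ENNReal.ofReal (ε ^ 2) ∂ν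
        ≤ ∫⁻ y in As ε, g y ∂ν := by
          apply setLIntegral_mono g_meas
          intro y hy
          exact ENNReal.ofReal_le_ofReal (by
            have : ε < |y| := hy
            nlinarith [abs_nonneg y, sq_abs y])
      _ ≤ ∫⁻ y, g y ∂ν := setLIntegral_le_lintegral _ _
  by_contra h
  rw [not_lt, top_le_iff] at h
  rw [h, ENNReal.mul_top (by simp [hε.ne', pow_pos])] at key
  exact absurd (top_le_iff.mp key) hν2.ne

end S9
namespace S9

/-- The atomic part of the approximating measure. -/
noncomputable def Dm (ε α₁ α₂ : ℝ) : Measure ℝ :=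
  ENNReal.ofReal α₁ • Measure.dirac (-(2 * ε)) + ENNReal.ofReal α₂ • Measure.dirac (2 * ε)

lemma Dm_null {ε α₁ α₂ : ℝ} (hε : 0 < ε) {s : Set ℝ} (hs : MeasurableSet s)
    (hsub : s ⊆ (As ε)ᶜ) : Dm ε α₁ α₂ s = 0 := by
  have h1 : -(2 * ε) ∉ s := fun h => by
    have := hsub h; rw [compl_As] at this
    simp only [mem_setOf_eq, abs_neg] at this
    rw [abs_of_pos (by linarith)] at this; linarith
  have h2 : (2 * ε) ∉ s := fun h => by
    have := hsub h; rw [compl_As] at this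
    simp only [mem_setOf_eq] at this
    rw [abs_of_pos (by linarith)] at this; linarith
  simp [Dm, Measure.dirac_apply' _ hs, indicator_of_notMem h1, indicator_of_notMem h2]

lemma approx3_eq (ν : Measure ℝ) (ε α₁ α₂ : ℝ) :
    (ν.restrict {y : ℝ | ε < |y|} + ENNReal.ofReal α₁ • Measure.dirac (-(2 * ε))
      + ENNReal.ofReal α₂ • Measure.dirac (2 * ε)) = ν.restrict (As ε) + Dm ε α₁ α₂ := by
  rw [Dm, ← add_assoc]; rfl

lemma inf_approx (ν : Measure ℝ) {ε : ℝ} (hε : 0 < ε) (α₁ α₂ : ℝ) :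
    ν ⊓ (ν.restrict (As ε) + Dm ε α₁ α₂) = ν.restrict (As ε) := by
  refine le_antisymm ?_ (le_inf Measure.restrict_le_self (Measure.le_add_right le_rfl))
  rw [Measure.le_iff]
  intro s hs
  have hsplit : (ν ⊓ (ν.restrict (As ε) + Dm ε α₁ α₂)) (s ∩ As ε)
      + (ν ⊓ (ν.restrict (As ε) + Dm ε α₁ α₂)) (s \ As ε)
      = (ν ⊓ (ν.restrict (As ε) + Dm ε α₁ α₂)) s := measure_inter_add_diff s (measAs ε)
  have h1 : (ν ⊓ (ν.restrict (As ε) + Dm ε α₁ α₂)) (s ∩ As ε) ≤ ν (s ∩ As ε) :=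
    Measure.le_iff'.mp inf_le_left _
  have h2 : (ν ⊓ (ν.restrict (As ε) + Dm ε α₁ α₂)) (s \ As ε) = 0 := by
    have hle : (ν ⊓ (ν.restrict (As ε) + Dm ε α₁ α₂)) (s \ As ε)
        ≤ (ν.restrict (As ε) + Dm ε α₁ α₂) (s \ As ε) := Measure.le_iff'.mp inf_le_right _
    have : (ν.restrict (As ε) + Dm ε α₁ α₂) (s \ As ε) = 0 := by
      rw [Measure.add_apply, Measure.restrict_apply (hs.diff (measAs ε)),
        Dm_null hε (hs.diff (measAs ε)) (fun y hy => hy.2)]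
      have : s \ As ε ∩ As ε = ∅ := by ext y; simp +contextual [mem_diff]
      simp [this]
    exact le_antisymm (this ▸ hle) (zero_le)
  rw [← hsplit, h2, add_zero, Measure.restrict_apply hs]
  exact h1

lemma tvDist_approx (ν : Measure ℝ) {ε : ℝ} (hε : 0 < ε) (α₁ α₂ : ℝ)
    (hA : ν (As ε) ≠ ⊤) :
    tvDist ν (ν.restrict (As ε) + Dm ε α₁ α₂) = ν.restrict (As ε)ᶜ + Dm ε α₁ α₂ := by
  haveI : IsFiniteMeasure (ν.restrict (As ε)) :=
    ⟨by rw [Measure.restrict_apply_univ]; exact lt_top_iff_ne_top.mpr hA⟩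
  rw [tvDist, inf_approx ν hε]
  have h1 : ν - ν.restrict (As ε) = ν.restrict (As ε)ᶜ := by
    nth_rewrite 1 [← Measure.restrict_add_restrict_compl (μ := ν) (measAs ε)]
    rw [add_comm]
    exact Measure.add_sub_cancel
  have h2 : (ν.restrict (As ε) + Dm ε α₁ α₂) - ν.restrict (As ε) = Dm ε α₁ α₂ := by
    rw [add_comm]
    exact Measure.add_sub_cancel
  rw [h1, h2]

end S9
namespace S9

lemma ofReal_int_sq (m : Measure ℝ) (hfin : (∫⁻ y, g y ∂m) ≠ ⊤) :
    ENNReal.ofReal (∫ y, y ^ 2 ∂m) = ∫⁻ y, g y ∂m := by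
  rw [integral_eq_lintegral_of_nonneg_ae (Eventually.of_forall fun y => sq_nonneg y)
    (continuous_pow 2).aestronglyMeasurable]
  exact ENNReal.ofReal_toReal hfin

lemma lint_f_Dm {ε : ℝ} (hε : 0 < ε) {α₁ α₂ : ℝ} (h₁ : 0 ≤ α₁) (h₂ : 0 ≤ α₂) :
    ∫⁻ y, f y ∂(Dm ε α₁ α₂) = ENNReal.ofReal ((α₁ + α₂) * (8 * ε ^ 3)) := by
  have habs : |(-(2 * ε))| = 2 * ε := by rw [abs_neg, abs_of_pos (by linarith)]
  have habs2 : |(2 * ε)| = 2 * ε := abs_of_pos (by linarith)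
  have hf : f (-(2 * ε)) = ENNReal.ofReal (8 * ε ^ 3) := by
    unfold f; rw [habs]; ring_nf
  have hf2 : f (2 * ε) = ENNReal.ofReal (8 * ε ^ 3) := by
    unfold f; rw [habs2]; ring_nf
  rw [Dm, lintegral_add_measure, lintegral_smul_measure, lintegral_smul_measure,
    lintegral_dirac _ f, lintegral_dirac _ f, hf, hf2, smul_eq_mul, smul_eq_mul,
    ← ENNReal.ofReal_mul h₁, ← ENNReal.ofReal_mul h₂,
    ← ENNReal.ofReal_add (by positivity) (by positivity)]
  ring_nf

lemma lint_g_Dm {ε : ℝ} (hε : 0 < ε) {α₁ α₂ : ℝ} (h₁ : 0 ≤ α₁) (h₂ : 0 ≤ α₂) :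
    ∫⁻ y, g y ∂(Dm ε α₁ α₂) = ENNReal.ofReal ((α₁ + α₂) * (4 * ε ^ 2)) := by
  have hg : g (-(2 * ε)) = ENNReal.ofReal (4 * ε ^ 2) := by
    unfold g; ring_nf
  have hg2 : g (2 * ε) = ENNReal.ofReal (4 * ε ^ 2) := by
    unfold g; ring_nf
  rw [Dm, lintegral_add_measure, lintegral_smul_measure, lintegral_smul_measure,
    lintegral_dirac _ g, lintegral_dirac _ g, hg, hg2, smul_eq_mul, smul_eq_mul,
    ← ENNReal.ofReal_mul h₁, ← ENNReal.ofReal_mul h₂,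
    ← ENNReal.ofReal_add (by positivity) (by positivity)]
  ring_nf

lemma J_approx (ν : Measure ℝ) {ε : ℝ} (hε : 0 < ε) {α₁ α₂ : ℝ} (h₁ : 0 ≤ α₁) (h₂ : 0 ≤ α₂)
    (hA : ν (As ε) ≠ ⊤) :
    Jfun3 ν (ν.restrict (As ε) + Dm ε α₁ α₂)
      = (∫⁻ y in (As ε)ᶜ, f y ∂ν) + ENNReal.ofReal ((α₁ + α₂) * (8 * ε ^ 3)) := by
  rw [Jfun3, tvDist_approx ν hε α₁ α₂ hA]
  have : (fun y => ENNReal.ofReal (|y| ^ 3)) = f := rfl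
  rw [this, lintegral_add_measure, lint_f_Dm hε h₁ h₂]

end S9
namespace S9

lemma lint_g_total (ν : Measure ℝ) {ε α₁ α₂ : ℝ} (hε : 0 < ε) (h₁ : 0 ≤ α₁) (h₂ : 0 ≤ α₂) :
    ∫⁻ y, g y ∂(ν.restrict (As ε) + Dm ε α₁ α₂)
      = (∫⁻ y in As ε, g y ∂ν) + ENNReal.ofReal ((α₁ + α₂) * (4 * ε ^ 2)) := by
  rw [lintegral_add_measure, lint_g_Dm hε h₁ h₂]

lemma constraint_approx (ν : Measure ℝ) (hν2 : (∫⁻ y, g y ∂ν) < ⊤)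
    {Λ ε α₁ α₂ : ℝ} (hε : 0 < ε) (h₁ : 0 ≤ α₁) (h₂ : 0 ≤ α₂)
    (hεdef : (ν {y : ℝ | ε < |y|}).toReal
        + (1 / (4 * ε ^ 2)) * (∫ y in {y : ℝ | |y| ≤ ε}, y ^ 2 ∂ν) = Λ)
    (hαsum : α₁ + α₂ = (1 / (4 * ε ^ 2)) * ∫ y in {y : ℝ | |y| ≤ ε}, y ^ 2 ∂ν) :
    Constraint3 ν Λ (ν.restrict (As ε) + Dm ε α₁ α₂) := by
  set I : ℝ := ∫ y in {y : ℝ | |y| ≤ ε}, y ^ 2 ∂ν with hI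
  have hA : ν (As ε) ≠ ⊤ := (measure_As_lt_top hν2 hε).ne
  have hgfin : ∀ s : Set ℝ, (∫⁻ y in s, g y ∂ν) ≠ ⊤ :=
    fun s => ((setLIntegral_le_lintegral s g).trans_lt hν2).ne
  have hofI : ENNReal.ofReal I = ∫⁻ y in (As ε)ᶜ, g y ∂ν := by
    rw [hI, compl_As]; exact ofReal_int_sq _ (hgfin _)
  -- total g-lintegral of the approximating measure equals that of ν
  have harith : (α₁ + α₂) * (4 * ε ^ 2) = I := by
    rw [hαsum]; field_simp
  have hgtot : ∫⁻ y, g y ∂(ν.restrict (As ε) + Dm ε α₁ α₂) = ∫⁻ y, g y ∂ν := by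
    rw [lint_g_total ν hε h₁ h₂, harith, hofI]
    exact lintegral_add_compl g (measAs ε)
  -- mass
  have hmass : (ν.restrict (As ε) + Dm ε α₁ α₂) univ = ENNReal.ofReal Λ := by
    have hDu : Dm ε α₁ α₂ univ = ENNReal.ofReal (α₁ + α₂) := by
      simp [Dm, ENNReal.ofReal_add h₁ h₂]
    rw [Measure.add_apply, Measure.restrict_apply_univ, hDu,
      ← ENNReal.ofReal_toReal hA, ← ENNReal.ofReal_add ENNReal.toReal_nonneg (by linarith),
      ← hεdef, hαsum]
    rfl
  refine ⟨⟨by rw [hmass]; exact ENNReal.ofReal_lt_top⟩, hmass, ?_, ?_⟩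
  · refine ⟨(continuous_pow 2).aestronglyMeasurable, ?_⟩
    rw [hasFiniteIntegral_iff_ofReal (Eventually.of_forall fun y => sq_nonneg y)]
    have : (fun y : ℝ => ENNReal.ofReal (y ^ 2)) = g := rfl
    rw [this, hgtot]
    exact hν2
  · rw [integral_eq_lintegral_of_nonneg_ae (Eventually.of_forall fun y => sq_nonneg y)
      (continuous_pow 2).aestronglyMeasurable,
      integral_eq_lintegral_of_nonneg_ae (Eventually.of_forall fun y => sq_nonneg y)
      (continuous_pow 2).aestronglyMeasurable]
    exact congrArg ENNReal.toReal hgtot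

lemma I_nonneg (ν : Measure ℝ) (s : Set ℝ) : 0 ≤ ∫ y in s, y ^ 2 ∂ν :=
  integral_nonneg fun y => sq_nonneg y

lemma J_approx_le (ν : Measure ℝ) (hν2 : (∫⁻ y, g y ∂ν) < ⊤)
    {ε α₁ α₂ : ℝ} (hε : 0 < ε) (h₁ : 0 ≤ α₁) (h₂ : 0 ≤ α₂)
    (hαsum : α₁ + α₂ = (1 / (4 * ε ^ 2)) * ∫ y in {y : ℝ | |y| ≤ ε}, y ^ 2 ∂ν) :
    Jfun3 ν (ν.restrict (As ε) + Dm ε α₁ α₂)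
      ≤ ENNReal.ofReal (3 * ε * ∫ y in {y : ℝ | |y| ≤ ε}, y ^ 2 ∂ν) := by
  set I : ℝ := ∫ y in {y : ℝ | |y| ≤ ε}, y ^ 2 ∂ν with hI
  have hInn : 0 ≤ I := I_nonneg ν _
  have hA : ν (As ε) ≠ ⊤ := (measure_As_lt_top hν2 hε).ne
  have hgfin : ∀ s : Set ℝ, (∫⁻ y in s, g y ∂ν) ≠ ⊤ :=
    fun s => ((setLIntegral_le_lintegral s g).trans_lt hν2).ne
  have hofI : ENNReal.ofReal I = ∫⁻ y in (As ε)ᶜ, g y ∂ν := by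
    rw [hI, compl_As]; exact ofReal_int_sq _ (hgfin _)
  rw [J_approx ν hε h₁ h₂ hA]
  have hf_le : (∫⁻ y in (As ε)ᶜ, f y ∂ν) ≤ ENNReal.ofReal (ε * I) := by
    calc (∫⁻ y in (As ε)ᶜ, f y ∂ν) ≤ ∫⁻ y in (As ε)ᶜ, ENNReal.ofReal ε * g y ∂ν := by
          apply setLIntegral_mono (measurable_const.mul g_meas)
          intro y hy
          rw [compl_As] at hy
          have hy' : |y| ≤ ε := hy
          unfold f g
          rw [Pi.mul_apply, ← ENNReal.ofReal_mul hε.le]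
          exact ENNReal.ofReal_le_ofReal (by nlinarith [abs_nonneg y, sq_abs y])
      _ = ENNReal.ofReal ε * ∫⁻ y in (As ε)ᶜ, g y ∂ν := lintegral_const_mul _ g_meas
      _ = ENNReal.ofReal (ε * I) := by rw [← hofI, ← ENNReal.ofReal_mul hε.le]
  have hatom : (α₁ + α₂) * (8 * ε ^ 3) = 2 * ε * I := by
    rw [hαsum]; field_simp; ring
  calc (∫⁻ y in (As ε)ᶜ, f y ∂ν) + ENNReal.ofReal ((α₁ + α₂) * (8 * ε ^ 3))
      ≤ ENNReal.ofReal (ε * I) + ENNReal.ofReal (2 * ε * I) := by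
        rw [hatom]; exact add_le_add_left hf_le _
    _ = ENNReal.ofReal (3 * ε * I) := by
        rw [← ENNReal.ofReal_add (by positivity) (by positivity)]; ring_nf

end S9
namespace S9

lemma real_key1 {ε y : ℝ} (hε : 0 < ε) : 3 * ε * y ^ 2 ≤ |y| ^ 3 + 4 * ε ^ 3 := by
  nlinarith [abs_nonneg y, sq_abs y, sq_nonneg (|y| - 2 * ε),
    mul_nonneg (add_nonneg (abs_nonneg y) hε.le) (sq_nonneg (|y| - 2 * ε))]

lemma key1 (τ : Measure ℝ) {ε : ℝ} (hε : 0 < ε) :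
    ENNReal.ofReal (3 * ε) * ∫⁻ y, g y ∂τ
      ≤ (∫⁻ y, f y ∂τ) + ENNReal.ofReal (4 * ε ^ 3) * τ univ := by
  have hpt : ∀ y, ENNReal.ofReal (3 * ε) * g y ≤ f y + ENNReal.ofReal (4 * ε ^ 3) := by
    intro y
    unfold f g
    rw [← ENNReal.ofReal_mul (by positivity), ← ENNReal.ofReal_add (by positivity) (by positivity)]
    exact ENNReal.ofReal_le_ofReal (real_key1 hε)
  calc ENNReal.ofReal (3 * ε) * ∫⁻ y, g y ∂τ
      = ∫⁻ y, ENNReal.ofReal (3 * ε) * g y ∂τ := (lintegral_const_mul _ g_meas).symm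
    _ ≤ ∫⁻ y, f y + ENNReal.ofReal (4 * ε ^ 3) ∂τ := lintegral_mono hpt
    _ = (∫⁻ y, f y ∂τ) + ENNReal.ofReal (4 * ε ^ 3) * τ univ := by
        rw [lintegral_add_right _ measurable_const, lintegral_const]

lemma key2 (ν σ ρ : Measure ℝ) {ε : ℝ} (hε : 0 < ε) (hsum : σ + ρ = ν) :
    (∫⁻ y in (As ε)ᶜ, f y ∂ν) + ENNReal.ofReal (3 * ε) * (∫⁻ y in (As ε)ᶜ, g y ∂ν)
      + ENNReal.ofReal (4 * ε ^ 3) * ν (As ε)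
    ≤ (∫⁻ y, f y ∂σ) + ENNReal.ofReal (3 * ε) * (∫⁻ y, g y ∂σ)
      + ENNReal.ofReal (4 * ε ^ 3) * ρ univ := by
  set c : ℝ≥0∞ := ENNReal.ofReal (4 * ε ^ 3) with hc
  set h : ℝ → ℝ≥0∞ := fun y => f y + ENNReal.ofReal (3 * ε) * g y with hh
  have h_meas : Measurable h := f_meas.add (measurable_const.mul g_meas)
  have hsplit : ∀ m : Measure ℝ, (∫⁻ y, f y ∂m) + ENNReal.ofReal (3 * ε) * ∫⁻ y, g y ∂m
      = ∫⁻ y, h y ∂m := by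
    intro m
    rw [hh]
    rw [lintegral_add_left f_meas, lintegral_const_mul _ g_meas]
  have hsplit' : ∀ m : Measure ℝ, ∀ s : Set ℝ,
      (∫⁻ y in s, f y ∂m) + ENNReal.ofReal (3 * ε) * ∫⁻ y in s, g y ∂m
      = ∫⁻ y in s, h y ∂m := fun m s => hsplit (m.restrict s)
  rw [hsplit σ, hsplit' ν ((As ε)ᶜ)]
  -- pointwise bounds
  have hA_pt : ∀ y ∈ As ε, c ≤ h y := by
    intro y hy
    have hy' : ε < |y| := hy
    rw [hh, hc]
    simp only
    unfold f g
    rw [← ENNReal.ofReal_mul (by positivity), ← ENNReal.ofReal_add (by positivity) (by positivity)]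
    have hcube : ε ^ 3 ≤ |y| ^ 3 := pow_le_pow_left₀ hε.le hy'.le 3
    have hsq : ε ^ 2 ≤ y ^ 2 := by nlinarith [sq_abs y, pow_le_pow_left₀ hε.le hy'.le 2]
    exact ENNReal.ofReal_le_ofReal (by nlinarith [hε.le])
  have hB_pt : ∀ y ∈ (As ε)ᶜ, h y ≤ c := by
    intro y hy
    rw [compl_As] at hy
    have hy' : |y| ≤ ε := hy
    rw [hh, hc]
    simp only
    unfold f g
    rw [← ENNReal.ofReal_mul (by positivity), ← ENNReal.ofReal_add (by positivity) (by positivity)]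
    have hcube : |y| ^ 3 ≤ ε ^ 3 := pow_le_pow_left₀ (abs_nonneg y) hy' 3
    have hsq : y ^ 2 ≤ ε ^ 2 := by nlinarith [sq_abs y, pow_le_pow_left₀ (abs_nonneg y) hy' 2]
    exact ENNReal.ofReal_le_ofReal (by nlinarith [hε.le])
  -- decompose the σ-integral and ρ-mass
  have hσ : ∫⁻ y, h y ∂σ = (∫⁻ y in As ε, h y ∂σ) + ∫⁻ y in (As ε)ᶜ, h y ∂σ :=
    (lintegral_add_compl h (measAs ε)).symm
  have hρ : ρ univ = ρ (As ε) + ρ (As ε)ᶜ := (measure_add_measure_compl (measAs ε)).symm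
  have hνA : ν (As ε) = σ (As ε) + ρ (As ε) := by rw [← hsum]; rfl
  have hνB : ∫⁻ y in (As ε)ᶜ, h y ∂ν
      = (∫⁻ y in (As ε)ᶜ, h y ∂σ) + ∫⁻ y in (As ε)ᶜ, h y ∂ρ := by
    rw [← hsum, Measure.restrict_add, lintegral_add_measure]
  have stepA : c * σ (As ε) ≤ ∫⁻ y in As ε, h y ∂σ := by
    rw [← setLIntegral_const (As ε) c]
    exact setLIntegral_mono h_meas hA_pt
  have stepB : (∫⁻ y in (As ε)ᶜ, h y ∂ρ) ≤ c * ρ (As ε)ᶜ := by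
    rw [← setLIntegral_const ((As ε)ᶜ) c]
    exact setLIntegral_mono measurable_const hB_pt
  calc (∫⁻ y in (As ε)ᶜ, h y ∂ν) + c * ν (As ε)
      = (∫⁻ y in (As ε)ᶜ, h y ∂σ) + (∫⁻ y in (As ε)ᶜ, h y ∂ρ) + (c * σ (As ε) + c * ρ (As ε)) := by
        rw [hνB, hνA, mul_add]
    _ ≤ (∫⁻ y in (As ε)ᶜ, h y ∂σ) + c * ρ (As ε)ᶜ + (∫⁻ y in As ε, h y ∂σ + c * ρ (As ε)) := by
        gcongr
    _ = (∫⁻ y, h y ∂σ) + c * ρ univ := by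
        rw [hσ, hρ, mul_add]; ring
end S9
namespace S9

lemma optimal (ν : Measure ℝ) (hν2 : (∫⁻ y, g y ∂ν) < ⊤)
    {Λ ε α₁ α₂ : ℝ} (hε : 0 < ε) (h₁ : 0 ≤ α₁) (h₂ : 0 ≤ α₂)
    (hεdef : (ν {y : ℝ | ε < |y|}).toReal
        + (1 / (4 * ε ^ 2)) * (∫ y in {y : ℝ | |y| ≤ ε}, y ^ 2 ∂ν) = Λ)
    (hαsum : α₁ + α₂ = (1 / (4 * ε ^ 2)) * ∫ y in {y : ℝ | |y| ≤ ε}, y ^ 2 ∂ν)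
    (μ : Measure ℝ) (hμ : Constraint3 ν Λ μ) :
    Jfun3 ν (ν.restrict (As ε) + Dm ε α₁ α₂) ≤ Jfun3 ν μ := by
  set I : ℝ := ∫ y in {y : ℝ | |y| ≤ ε}, y ^ 2 ∂ν with hI
  rw [show {y : ℝ | ε < |y|} = As ε from rfl] at hεdef
  have hInn : 0 ≤ I := I_nonneg ν _
  have hA : ν (As ε) ≠ ⊤ := (measure_As_lt_top hν2 hε).ne
  have hgfin : ∀ s : Set ℝ, (∫⁻ y in s, g y ∂ν) ≠ ⊤ :=
    fun s => ((setLIntegral_le_lintegral s g).trans_lt hν2).ne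
  have hofI : ENNReal.ofReal I = ∫⁻ y in (As ε)ᶜ, g y ∂ν := by
    rw [hI, compl_As]; exact ofReal_int_sq _ (hgfin _)
  haveI : IsFiniteMeasure μ := hμ.1
  set ρ : Measure ℝ := ν ⊓ μ with hρdef
  set σ : Measure ℝ := ν - ρ with hσdef
  set τ : Measure ℝ := μ - ρ with hτdef
  haveI hρfin : IsFiniteMeasure ρ :=
    ⟨lt_of_le_of_lt (Measure.le_iff'.mp inf_le_right univ) (measure_lt_top μ univ)⟩
  have h1 : σ + ρ = ν := Measure.sub_add_cancel_of_le inf_le_left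
  have h2 : τ + ρ = μ := Measure.sub_add_cancel_of_le inf_le_right
  have hJμ : Jfun3 ν μ = (∫⁻ y, f y ∂σ) + ∫⁻ y, f y ∂τ := by
    rw [Jfun3, tvDist]
    have : (fun y => ENNReal.ofReal (|y| ^ 3)) = f := rfl
    rw [this]
    exact lintegral_add_measure f _ _
  -- second moments
  have hgν : ∫⁻ y, g y ∂ν = (∫⁻ y, g y ∂σ) + ∫⁻ y, g y ∂ρ := by
    rw [← h1, lintegral_add_measure]
  have hgμ : ∫⁻ y, g y ∂μ = (∫⁻ y, g y ∂τ) + ∫⁻ y, g y ∂ρ := by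
    rw [← h2, lintegral_add_measure]
  have hmom : ∫⁻ y, g y ∂μ = ∫⁻ y, g y ∂ν := by
    rw [← ofReal_int_sq ν hν2.ne, ← hμ.2.2.2,
      ofReal_integral_eq_lintegral_ofReal hμ.2.2.1 (Eventually.of_forall fun y => sq_nonneg y)]
    rfl
  have hρg : (∫⁻ y, g y ∂ρ) ≠ ⊤ := by
    intro htop
    rw [htop] at hgν
    simp at hgν
    exact hν2.ne hgν
  have hSeq : ∫⁻ y, g y ∂σ = ∫⁻ y, g y ∂τ := by
    have : (∫⁻ y, g y ∂σ) + ∫⁻ y, g y ∂ρ = (∫⁻ y, g y ∂τ) + ∫⁻ y, g y ∂ρ := by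
      rw [← hgν, ← hgμ, hmom]
    rwa [add_comm (∫⁻ y, g y ∂σ) _, add_comm (∫⁻ y, g y ∂τ) _, ENNReal.add_right_inj hρg] at this
  -- mass identity
  have hmassμ : (τ univ) + ρ univ = ENNReal.ofReal Λ := by
    rw [← Measure.add_apply, h2, hμ.2.1]
  set c : ℝ≥0∞ := ENNReal.ofReal (4 * ε ^ 3) with hc
  have hΛsplit : c * ENNReal.ofReal Λ = c * ν (As ε) + ENNReal.ofReal (ε * I) := by
    have hofΛ : ENNReal.ofReal Λ = ν (As ε) + ENNReal.ofReal ((1 / (4 * ε ^ 2)) * I) := by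
      rw [← hεdef, ENNReal.ofReal_add ENNReal.toReal_nonneg (by positivity),
        ENNReal.ofReal_toReal hA]
    rw [hofΛ, mul_add, hc, ← ENNReal.ofReal_mul (by positivity)]
    congr 2
    field_simp
  -- main chain
  have main : Jfun3 ν μ + (c * ν (As ε) + ENNReal.ofReal (ε * I))
      ≥ (∫⁻ y in (As ε)ᶜ, f y ∂ν) + ENNReal.ofReal (2 * ε * I)
        + (c * ν (As ε) + ENNReal.ofReal (ε * I)) := by
    have e1 : Jfun3 ν μ + (c * ν (As ε) + ENNReal.ofReal (ε * I))
        = (∫⁻ y, f y ∂σ) + ((∫⁻ y, f y ∂τ) + c * τ univ) + c * ρ univ := by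
      rw [hJμ, ← hΛsplit, ← hmassμ, mul_add]; ring
    have e2 : (∫⁻ y, f y ∂σ) + ((∫⁻ y, f y ∂τ) + c * τ univ) + c * ρ univ
        ≥ (∫⁻ y, f y ∂σ) + ENNReal.ofReal (3 * ε) * (∫⁻ y, g y ∂σ) + c * ρ univ := by
      gcongr
      rw [hSeq]
      exact key1 τ hε
    have e3 := key2 ν σ ρ hε h1
    have e4 : (∫⁻ y in (As ε)ᶜ, f y ∂ν) + ENNReal.ofReal (3 * ε) * (∫⁻ y in (As ε)ᶜ, g y ∂ν)
          + c * ν (As ε)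
        = (∫⁻ y in (As ε)ᶜ, f y ∂ν) + ENNReal.ofReal (2 * ε * I)
          + (c * ν (As ε) + ENNReal.ofReal (ε * I)) := by
      rw [← hofI, ← ENNReal.ofReal_mul (by positivity : (0:ℝ) ≤ 3 * ε)]
      have : (3 : ℝ) * ε * I = 2 * ε * I + ε * I := by ring
      rw [this, ENNReal.ofReal_add (by positivity) (by positivity)]
      ring
    calc Jfun3 ν μ + (c * ν (As ε) + ENNReal.ofReal (ε * I))
        = (∫⁻ y, f y ∂σ) + ((∫⁻ y, f y ∂τ) + c * τ univ) + c * ρ univ := e1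
      _ ≥ (∫⁻ y, f y ∂σ) + ENNReal.ofReal (3 * ε) * (∫⁻ y, g y ∂σ) + c * ρ univ := e2
      _ ≥ (∫⁻ y in (As ε)ᶜ, f y ∂ν) + ENNReal.ofReal (3 * ε) * (∫⁻ y in (As ε)ᶜ, g y ∂ν)
          + c * ν (As ε) := e3
      _ = (∫⁻ y in (As ε)ᶜ, f y ∂ν) + ENNReal.ofReal (2 * ε * I)
          + (c * ν (As ε) + ENNReal.ofReal (ε * I)) := e4
  have hJapprox : Jfun3 ν (ν.restrict (As ε) + Dm ε α₁ α₂)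
      = (∫⁻ y in (As ε)ᶜ, f y ∂ν) + ENNReal.ofReal (2 * ε * I) := by
    rw [J_approx ν hε h₁ h₂ hA]
    congr 1
    rw [hαsum]
    congr 1
    field_simp
    ring
  rw [hJapprox]
  have hfin : (c * ν (As ε) + ENNReal.ofReal (ε * I)) ≠ ⊤ := by
    apply ENNReal.add_ne_top.mpr
    exact ⟨ENNReal.mul_ne_top ENNReal.ofReal_ne_top hA, ENNReal.ofReal_ne_top⟩
  exact (ENNReal.add_le_add_iff_right hfin).mp main

end S9
namespace S9

lemma sqrt_add_le {a b : ℝ} (ha : 0 ≤ a) (hb : 0 ≤ b) :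
    Real.sqrt (a + b) ≤ Real.sqrt a + Real.sqrt b := by
  rw [show a + b = a + b from rfl]
  have h : a + b ≤ (Real.sqrt a + Real.sqrt b) ^ 2 := by
    have := Real.sq_sqrt ha
    have := Real.sq_sqrt hb
    nlinarith [Real.sqrt_nonneg a, Real.sqrt_nonneg b]
  calc Real.sqrt (a + b) ≤ Real.sqrt ((Real.sqrt a + Real.sqrt b) ^ 2) := Real.sqrt_le_sqrt h
    _ = Real.sqrt a + Real.sqrt b := Real.sqrt_sq (by positivity)

lemma I_mono (ν : Measure ℝ) (hν2 : (∫⁻ y, g y ∂ν) < ⊤) {δ δ' : ℝ} (h : δ ≤ δ') :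
    (∫ y in {y : ℝ | |y| ≤ δ}, y ^ 2 ∂ν) ≤ ∫ y in {y : ℝ | |y| ≤ δ'}, y ^ 2 ∂ν := by
  have e1 : ∀ r : ℝ, (∫ y in {y : ℝ | |y| ≤ r}, y ^ 2 ∂ν)
      = (∫⁻ y in {y : ℝ | |y| ≤ r}, g y ∂ν).toReal := fun r =>
    integral_eq_lintegral_of_nonneg_ae (Eventually.of_forall fun y => sq_nonneg y)
      (continuous_pow 2).aestronglyMeasurable
  rw [e1, e1]
  apply ENNReal.toReal_mono ((setLIntegral_le_lintegral _ _).trans_lt hν2).ne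
  exact lintegral_mono_set (fun y hy => le_trans hy h)

lemma I_le_M (ν : Measure ℝ) (hν2 : (∫⁻ y, g y ∂ν) < ⊤) (δ : ℝ) :
    (∫ y in {y : ℝ | |y| ≤ δ}, y ^ 2 ∂ν) ≤ (∫⁻ y, g y ∂ν).toReal := by
  rw [integral_eq_lintegral_of_nonneg_ae (Eventually.of_forall fun y => sq_nonneg y)
      (continuous_pow 2).aestronglyMeasurable]
  exact ENNReal.toReal_mono hν2.ne (setLIntegral_le_lintegral _ _)

lemma I_small (ν : Measure ℝ) (hν0 : ν {0} = 0) (hν2 : (∫⁻ y, g y ∂ν) < ⊤)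
    {η : ℝ} (hη : 0 < η) :
    ∃ δ : ℝ, 0 < δ ∧ (∫ y in {y : ℝ | |y| ≤ δ}, y ^ 2 ∂ν) < η := by
  set s : ℕ → Set ℝ := fun n => {y : ℝ | |y| ≤ 1 / (n + 1)} with hs
  have hsm : ∀ n, MeasurableSet (s n) := fun n =>
    measurableSet_le continuous_abs.measurable measurable_const
  have hanti : Antitone s := by
    intro m n hmn y hy
    have hy' : |y| ≤ 1 / ((n : ℝ) + 1) := hy
    have h : (m : ℝ) ≤ (n : ℝ) := Nat.cast_le.mpr hmn
    show |y| ≤ 1 / ((m : ℝ) + 1)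
    refine le_trans hy' ?_
    apply one_div_le_one_div_of_le (by positivity)
    linarith
  have hiInter : ⋂ n, s n = {0} := by
    ext y
    simp only [mem_iInter, mem_singleton_iff, hs, mem_setOf_eq]
    constructor
    · intro hy
      by_contra hy0
      have habs : 0 < |y| := abs_pos.mpr hy0
      obtain ⟨n, hn⟩ := exists_nat_gt (1 / |y|)
      have h1 : 1 / |y| < (n : ℝ) + 1 := by linarith [Nat.cast_nonneg (α := ℝ) n]
      have := hy n
      have : 1 / ((n : ℝ) + 1) < |y| := by
        rw [div_lt_iff₀ (by positivity)] at *
        nlinarith [hy n]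
      linarith [hy n]
    · intro hy n; rw [hy]; simp; positivity
  have htend := MeasureTheory.tendsto_measure_iInter_atTop (μ := ν.withDensity g)
    (fun n => (hsm n).nullMeasurableSet) hanti
    ⟨0, by
      rw [withDensity_apply g (hsm 0)]
      exact ((setLIntegral_le_lintegral _ _).trans_lt hν2).ne⟩
  rw [hiInter] at htend
  have hzero : (ν.withDensity g) {0} = 0 := by
    rw [withDensity_apply g (measurableSet_singleton 0)]
    exact setLIntegral_measure_zero _ _ hν0
  rw [hzero] at htend
  have hev : ∀ᶠ n in atTop, (ν.withDensity g) (s n) < ENNReal.ofReal η :=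
    htend.eventually_lt_const (by simp [hη])
  obtain ⟨n, hn⟩ := hev.exists
  refine ⟨1 / (n + 1), by positivity, ?_⟩
  have : (∫ y in {y : ℝ | |y| ≤ 1 / (n + 1 : ℝ)}, y ^ 2 ∂ν)
      = ((ν.withDensity g) (s n)).toReal := by
    rw [withDensity_apply g (hsm n),
      integral_eq_lintegral_of_nonneg_ae (Eventually.of_forall fun y => sq_nonneg y)
      (continuous_pow 2).aestronglyMeasurable]
    rfl
  rw [this]
  exact ENNReal.toReal_lt_of_lt_ofReal hn

end S9
namespace S9

lemma eventually_eps_le (ν : Measure ℝ) (hν2 : (∫⁻ y, g y ∂ν) < ⊤)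
    (ε : ℝ → ℝ) (hε : ∀ Λ, 0 < Λ → 0 < ε Λ)
    (hεdef : ∀ Λ, 0 < Λ →
      (ν {y : ℝ | ε Λ < |y|}).toReal
        + (1 / (4 * ε Λ ^ 2)) * (∫ y in {y : ℝ | |y| ≤ ε Λ}, y ^ 2 ∂ν) = Λ)
    {δ : ℝ} (hδ : 0 < δ) : ∀ᶠ Λ in atTop, ε Λ ≤ δ := by
  set M : ℝ := (∫⁻ y, g y ∂ν).toReal with hM
  have hMnn : 0 ≤ M := ENNReal.toReal_nonneg
  set M₀ : ℝ := (ν (As δ)).toReal + (1 / (4 * δ ^ 2)) * M with hM₀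
  filter_upwards [eventually_gt_atTop (max M₀ 0)] with Λ hΛ
  have hΛpos : 0 < Λ := lt_of_le_of_lt (le_max_right _ _) hΛ
  have hΛM₀ : M₀ < Λ := lt_of_le_of_lt (le_max_left _ _) hΛ
  by_contra hcon
  push_neg at hcon
  have hεΛ := hε Λ hΛpos
  -- N(ε Λ) ≤ N(δ)
  have hN : (ν {y : ℝ | ε Λ < |y|}).toReal ≤ (ν (As δ)).toReal := by
    apply ENNReal.toReal_mono (measure_As_lt_top hν2 hδ).ne
    apply measure_mono
    intro y hy
    exact lt_trans hcon hy
  -- second term bound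
  have hI : (∫ y in {y : ℝ | |y| ≤ ε Λ}, y ^ 2 ∂ν) ≤ M := I_le_M ν hν2 _
  have hInn : 0 ≤ ∫ y in {y : ℝ | |y| ≤ ε Λ}, y ^ 2 ∂ν := I_nonneg ν _
  have hfrac : 1 / (4 * ε Λ ^ 2) ≤ 1 / (4 * δ ^ 2) := by
    apply one_div_le_one_div_of_le (by positivity)
    nlinarith
  have h2 : (1 / (4 * ε Λ ^ 2)) * (∫ y in {y : ℝ | |y| ≤ ε Λ}, y ^ 2 ∂ν)
      ≤ (1 / (4 * δ ^ 2)) * M :=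
    mul_le_mul hfrac hI hInn (by positivity)
  have := hεdef Λ hΛpos
  rw [hM₀] at hΛM₀
  linarith

lemma sq_mass_le (ν : Measure ℝ) (hν2 : (∫⁻ y, g y ∂ν) < ⊤) {ε : ℝ} (hε : 0 < ε) :
    ε ^ 2 * (ν (As ε)).toReal ≤ (∫⁻ y, g y ∂ν).toReal := by
  have key : ENNReal.ofReal (ε ^ 2) * ν (As ε) ≤ ∫⁻ y, g y ∂ν := by
    rw [← setLIntegral_const (As ε) (ENNReal.ofReal (ε ^ 2))]
    calc ∫⁻ _ in As ε, ENNReal.ofReal (ε ^ 2) ∂ν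
        ≤ ∫⁻ y in As ε, g y ∂ν := by
          apply setLIntegral_mono g_meas
          intro y hy
          have : ε < |y| := hy
          exact ENNReal.ofReal_le_ofReal (by nlinarith [abs_nonneg y, sq_abs y])
      _ ≤ ∫⁻ y, g y ∂ν := setLIntegral_le_lintegral _ _
  have := ENNReal.toReal_mono hν2.ne key
  rwa [ENNReal.toReal_mul, ENNReal.toReal_ofReal (by positivity)] at this

end S9
namespace S9

lemma tendsto_final (ν : Measure ℝ) (hν0 : ν {0} = 0) (hν2 : (∫⁻ y, g y ∂ν) < ⊤)
    (ε α₁ α₂ : ℝ → ℝ)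
    (hε : ∀ Λ, 0 < Λ → 0 < ε Λ)
    (hεdef : ∀ Λ, 0 < Λ →
      (ν {y : ℝ | ε Λ < |y|}).toReal
        + (1 / (4 * ε Λ ^ 2)) * (∫ y in {y : ℝ | |y| ≤ ε Λ}, y ^ 2 ∂ν) = Λ)
    (hα₁ : ∀ Λ, 0 < Λ → 0 ≤ α₁ Λ) (hα₂ : ∀ Λ, 0 < Λ → 0 ≤ α₂ Λ)
    (hαsum : ∀ Λ, 0 < Λ →
      α₁ Λ + α₂ Λ = (1 / (4 * ε Λ ^ 2)) * ∫ y in {y : ℝ | |y| ≤ ε Λ}, y ^ 2 ∂ν) :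
    Tendsto (fun Λ => Real.sqrt Λ *
        (Jfun3 ν (ν.restrict (As (ε Λ)) + Dm (ε Λ) (α₁ Λ) (α₂ Λ))).toReal)
      atTop (nhds 0) := by
  set M : ℝ := (∫⁻ y, g y ∂ν).toReal with hM
  set I : ℝ → ℝ := fun δ => ∫ y in {y : ℝ | |y| ≤ δ}, y ^ 2 ∂ν with hIdef
  have hInn : ∀ δ, 0 ≤ I δ := fun δ => I_nonneg ν _
  -- I ∘ ε tends to 0
  have H : Tendsto (fun Λ => I (ε Λ)) atTop (nhds 0) := by
    rw [tendsto_order]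
    constructor
    · intro a ha
      exact Eventually.of_forall fun Λ => lt_of_lt_of_le ha (hInn _)
    · intro a ha
      obtain ⟨δ, hδ, hIδ⟩ := I_small ν hν0 hν2 ha
      filter_upwards [eventually_eps_le ν hν2 ε hε hεdef hδ] with Λ hΛε
      exact lt_of_le_of_lt (I_mono ν hν2 hΛε) hIδ
  -- the dominating function tends to 0
  have hG : Tendsto (fun Λ => 3 * Real.sqrt M * I (ε Λ)
      + 3 / 2 * (I (ε Λ) * Real.sqrt (I (ε Λ)))) atTop (nhds 0) := by
    have h1 : Tendsto (fun Λ => 3 * Real.sqrt M * I (ε Λ)) atTop (nhds 0) := by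
      simpa using H.const_mul (3 * Real.sqrt M)
    have h2 : Tendsto (fun Λ => I (ε Λ) * Real.sqrt (I (ε Λ))) atTop (nhds 0) := by
      have hsq : Tendsto (fun Λ => Real.sqrt (I (ε Λ))) atTop (nhds 0) := by
        have := (Real.continuous_sqrt.tendsto 0).comp H
        simpa [Function.comp_def] using this
      simpa using H.mul hsq
    simpa using h1.add (h2.const_mul (3 / 2))
  apply squeeze_zero' (Eventually.of_forall fun Λ =>
    mul_nonneg (Real.sqrt_nonneg Λ) ENNReal.toReal_nonneg) _ hG
  -- the eventual bound
  filter_upwards [eventually_gt_atTop 0] with Λ hΛ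
  have hεp := hε Λ hΛ
  set e : ℝ := ε Λ with he
  set i : ℝ := I (ε Λ) with hi
  have hin : 0 ≤ i := hInn _
  have hJle := J_approx_le ν hν2 hεp (hα₁ Λ hΛ) (hα₂ Λ hΛ) (hαsum Λ hΛ)
  have htoReal : (Jfun3 ν (ν.restrict (As e) + Dm e (α₁ Λ) (α₂ Λ))).toReal ≤ 3 * e * i :=
    ENNReal.toReal_le_of_le_ofReal (mul_nonneg (by positivity) hin) hJle
  set N : ℝ := (ν (As e)).toReal with hN
  have hNnn : 0 ≤ N := ENNReal.toReal_nonneg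
  have hsqrtΛ : Real.sqrt Λ ≤ Real.sqrt N + 1 / (2 * e) * Real.sqrt i := by
    have hΛeq : Λ = N + 1 / (4 * e ^ 2) * i := (hεdef Λ hΛ).symm
    have hfrac : (1 : ℝ) / (4 * e ^ 2) = (1 / (2 * e)) ^ 2 := by
      field_simp; ring
    calc Real.sqrt Λ = Real.sqrt (N + 1 / (4 * e ^ 2) * i) := by rw [← hΛeq]
      _ ≤ Real.sqrt N + Real.sqrt (1 / (4 * e ^ 2) * i) :=
          sqrt_add_le hNnn (mul_nonneg (by positivity) hin)
      _ = Real.sqrt N + 1 / (2 * e) * Real.sqrt i := by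
          rw [Real.sqrt_mul (by positivity), hfrac, Real.sqrt_sq (by positivity)]
  have heN : e * Real.sqrt N ≤ Real.sqrt M := by
    have h1 : e ^ 2 * N ≤ M := sq_mass_le ν hν2 hεp
    calc e * Real.sqrt N = Real.sqrt (e ^ 2 * N) := by
          rw [Real.sqrt_mul (by positivity), Real.sqrt_sq hεp.le]
      _ ≤ Real.sqrt M := Real.sqrt_le_sqrt h1
  calc Real.sqrt Λ * (Jfun3 ν (ν.restrict (As e) + Dm e (α₁ Λ) (α₂ Λ))).toReal
      ≤ Real.sqrt Λ * (3 * e * i) :=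
        mul_le_mul_of_nonneg_left htoReal (Real.sqrt_nonneg Λ)
    _ ≤ (Real.sqrt N + 1 / (2 * e) * Real.sqrt i) * (3 * e * i) :=
        mul_le_mul_of_nonneg_right hsqrtΛ (mul_nonneg (by positivity) hin)
    _ = 3 * (e * Real.sqrt N) * i + 3 / 2 * (i * Real.sqrt i) := by
        field_simp
    _ ≤ 3 * Real.sqrt M * i + 3 / 2 * (i * Real.sqrt i) := by
        gcongr

end S9

theorem stmt_9 (ν : Measure ℝ)
    (hν0 : ν {0} = 0) (hac : ν ≪ volume) (hνinf : ν Set.univ = ⊤)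
    (hν2 : (∫⁻ y, ENNReal.ofReal (y ^ 2) ∂ν) < ⊤)
    (hν3 : (∫⁻ y, ENNReal.ofReal (|y| ^ 3) ∂ν) < ⊤)
    (ε α₁ α₂ : ℝ → ℝ)
    (hε : ∀ Λ, 0 < Λ → 0 < ε Λ)
    (hεdef : ∀ Λ, 0 < Λ →
      (ν {y : ℝ | ε Λ < |y|}).toReal
        + (1 / (4 * ε Λ ^ 2)) * (∫ y in {y : ℝ | |y| ≤ ε Λ}, y ^ 2 ∂ν) = Λ)
    (hα₁ : ∀ Λ, 0 < Λ → 0 ≤ α₁ Λ) (hα₂ : ∀ Λ, 0 < Λ → 0 ≤ α₂ Λ)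
    (hαsum : ∀ Λ, 0 < Λ →
      α₁ Λ + α₂ Λ = (1 / (4 * ε Λ ^ 2)) * ∫ y in {y : ℝ | |y| ≤ ε Λ}, y ^ 2 ∂ν) :
    (∀ Λ, 0 < Λ → Constraint3 ν Λ (approx3 ν (ε Λ) (α₁ Λ) (α₂ Λ)) ∧
      (∀ μ : Measure ℝ, Constraint3 ν Λ μ →
        Jfun3 ν (approx3 ν (ε Λ) (α₁ Λ) (α₂ Λ)) ≤ Jfun3 ν μ) ∧
      Jfun3 ν (approx3 ν (ε Λ) (α₁ Λ) (α₂ Λ)) ≤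
        ENNReal.ofReal (3 * ε Λ * ∫ y in {y : ℝ | |y| ≤ ε Λ}, y ^ 2 ∂ν)) ∧
    Filter.Tendsto (fun Λ => Real.sqrt Λ * (Jfun3 ν (approx3 ν (ε Λ) (α₁ Λ) (α₂ Λ))).toReal)
      Filter.atTop (nhds 0) := by
  have hg2 : (∫⁻ y, S9.g y ∂ν) < ⊤ := hν2
  have happrox : ∀ Λ, approx3 ν (ε Λ) (α₁ Λ) (α₂ Λ)
      = ν.restrict (S9.As (ε Λ)) + S9.Dm (ε Λ) (α₁ Λ) (α₂ Λ) := fun Λ =>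
    S9.approx3_eq ν (ε Λ) (α₁ Λ) (α₂ Λ)
  constructor
  · intro Λ hΛ
    rw [happrox Λ]
    exact ⟨S9.constraint_approx ν hg2 (hε Λ hΛ) (hα₁ Λ hΛ) (hα₂ Λ hΛ) (hεdef Λ hΛ) (hαsum Λ hΛ),
      fun μ hμ => S9.optimal ν hg2 (hε Λ hΛ) (hα₁ Λ hΛ) (hα₂ Λ hΛ) (hεdef Λ hΛ) (hαsum Λ hΛ) μ hμ,
      S9.J_approx_le ν hg2 (hε Λ hΛ) (hα₁ Λ hΛ) (hα₂ Λ hΛ) (hαsum Λ hΛ)⟩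
  · simp only [happrox]
    exact S9.tendsto_final ν hν0 hg2 ε α₁ α₂ hε hεdef hα₁ hα₂ hαsum
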